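/- arXiv:1909.05953 — 4 statements merged into one kernel-verified Lean document; each statement's English description precedes it below -/
import Mathlib

section
/- Let S be a finite set of open unit semicircles (open half-circles of the unit circle S^1). If the union of S covers a closed unit semicircle C̄, then there exists a subset R of S of cardinality 2 or 3 whose union still covers C̄. -/
open scoped RealInnerProductSpace

/-- The unit circle `S¹ ⊆ ℝ²`. -/
noncomputable def unitCircle : Set (EuclideanSpace ℝ (Fin 2)) := Metric.sphere 0 1

/-- The open unit semicircle of `S¹` determined by a (unit) vector `v`:
the open half of the circle on the positive side of the line through the
origin orthogonal to `v`, excluding its two endpoints. -/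
noncomputable def openSemicircle (v : EuclideanSpace ℝ (Fin 2)) :
    Set (EuclideanSpace ℝ (Fin 2)) := {x ∈ unitCircle | 0 < ⟪v, x⟫}

/-- The closed unit semicircle of `S¹` determined by a (unit) vector `v`,
including both endpoints. -/
noncomputable def closedSemicircle (v : EuclideanSpace ℝ (Fin 2)) :
    Set (EuclideanSpace ℝ (Fin 2)) := {x ∈ unitCircle | 0 ≤ ⟪v, x⟫}

/-- angle with cos = α, sin = β, lying in [-π/2, 3π/2). -/
noncomputable def angleOf (a b : ℝ) : ℝ :=
  if Complex.arg ⟨a, b⟩ < -(Real.pi/2) then Complex.arg ⟨a, b⟩ + 2*Real.pi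
  else Complex.arg ⟨a, b⟩

lemma angle_spec {a b : ℝ} (h : a^2 + b^2 = 1) :
    Real.cos (angleOf a b) = a ∧ Real.sin (angleOf a b) = b ∧
    -(Real.pi/2) ≤ angleOf a b ∧ angleOf a b < 3*Real.pi/2 := by
  have hπ := Real.pi_pos
  have hz : (⟨a, b⟩ : ℂ) ≠ 0 := by
    intro hzz
    rw [Complex.ext_iff] at hzz
    simp [Complex.zero_re, Complex.zero_im] at hzz
    obtain ⟨ha, hb⟩ := hzz
    rw [ha, hb] at h; norm_num at h
  have habs : ‖(⟨a, b⟩ : ℂ)‖ = 1 := by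
    rw [Complex.norm_def, Complex.normSq_mk]
    rw [show a * a + b * b = 1 by nlinarith]
    exact Real.sqrt_one
  have hc : Real.cos (Complex.arg ⟨a, b⟩) = a := by
    rw [Complex.cos_arg hz, habs]; simp
  have hs : Real.sin (Complex.arg ⟨a, b⟩) = b := by
    rw [Complex.sin_arg, habs]; simp
  have h1 := Complex.neg_pi_lt_arg (⟨a, b⟩ : ℂ)
  have h2 := Complex.arg_le_pi (⟨a, b⟩ : ℂ)
  unfold angleOf
  split_ifs with hlt
  · refine ⟨?_, ?_, by linarith, by linarith⟩
    · rw [Real.cos_add_two_pi]; exact hc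
    · rw [Real.sin_add_two_pi]; exact hs
  · exact ⟨hc, hs, by linarith, by linarith⟩

lemma cos_pos_iff_near {s : ℝ} (h1 : -(3*Real.pi/2) < s) (h2 : s ≤ 3*Real.pi/2) :
    0 < Real.cos s ↔ -(Real.pi/2) < s ∧ s < Real.pi/2 := by
  constructor
  · intro h
    constructor
    · by_contra hle; push_neg at hle
      have hcn := Real.cos_nonpos_of_pi_div_two_le_of_le (x := -s) (by linarith) (by linarith)
      rw [Real.cos_neg] at hcn; linarith
    · by_contra hle; push_neg at hle
      have hcn := Real.cos_nonpos_of_pi_div_two_le_of_le hle (by linarith)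
      linarith
  · intro ⟨ha, hb⟩; exact Real.cos_pos_of_mem_Ioo ⟨ha, hb⟩

lemma three_intervals_cover {α : Type*} (S : Finset α) (φ : α → ℝ)
    (h : ∀ t : ℝ, 0 ≤ t → t ≤ Real.pi →
      ∃ v ∈ S, φ v - Real.pi/2 < t ∧ t < φ v + Real.pi/2) :
    ∃ a ∈ S, ∃ b ∈ S, ∃ c ∈ S, φ a < Real.pi/2 ∧ Real.pi/2 < φ b ∧
      ∀ t : ℝ, 0 ≤ t → t ≤ Real.pi →
        ((φ a - Real.pi/2 < t ∧ t < φ a + Real.pi/2) ∨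
         (φ b - Real.pi/2 < t ∧ t < φ b + Real.pi/2) ∨
         (φ c - Real.pi/2 < t ∧ t < φ c + Real.pi/2)) := by
  classical
  have hπ := Real.pi_pos
  obtain ⟨a0, ha0S, ha0⟩ := h 0 le_rfl (le_of_lt hπ)
  set A : Finset α := S.filter (fun v => φ v - Real.pi/2 < 0 ∧ 0 < φ v + Real.pi/2) with hA
  have hA0 : a0 ∈ A := Finset.mem_filter.2 ⟨ha0S, ha0⟩
  obtain ⟨a, haA, hamax⟩ := Finset.exists_max_image A φ ⟨a0, hA0⟩
  have haS : a ∈ S := (Finset.mem_filter.1 haA).1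
  have ha : φ a - Real.pi/2 < 0 ∧ 0 < φ a + Real.pi/2 := (Finset.mem_filter.1 haA).2
  have he1pos : 0 < φ a + Real.pi/2 := ha.2
  have he1lt : φ a + Real.pi/2 < Real.pi := by linarith [ha.1]
  obtain ⟨c0, hc0S, hc0⟩ := h (φ a + Real.pi/2) (le_of_lt he1pos) (le_of_lt he1lt)
  set B : Finset α := S.filter
    (fun v => φ v - Real.pi/2 < φ a + Real.pi/2 ∧ φ a + Real.pi/2 < φ v + Real.pi/2) with hB
  have hB0 : c0 ∈ B := Finset.mem_filter.2 ⟨hc0S, hc0⟩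
  obtain ⟨c, hcB, hcmax⟩ := Finset.exists_max_image B φ ⟨c0, hB0⟩
  have hcS : c ∈ S := (Finset.mem_filter.1 hcB).1
  have hc : φ c - Real.pi/2 < φ a + Real.pi/2 ∧ φ a + Real.pi/2 < φ c + Real.pi/2 :=
    (Finset.mem_filter.1 hcB).2
  have hc2 : Real.pi/2 ≤ φ c := by
    by_contra hlt; push_neg at hlt
    have hcA : c ∈ A := by
      refine Finset.mem_filter.2 ⟨hcS, ?_, ?_⟩
      · linarith
      · linarith [hc.2, he1pos]
    have hle := hamax c hcA
    linarith [hc.2]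
  obtain ⟨b, hbS, hb⟩ := h Real.pi (le_of_lt hπ) le_rfl
  have hbgt : Real.pi/2 < φ b := by linarith [hb.2]
  refine ⟨a, haS, b, hbS, c, hcS, by linarith [ha.1], hbgt, ?_⟩
  intro t ht0 htπ
  by_cases h1 : t < φ a + Real.pi/2
  · exact Or.inl ⟨by linarith [ha.1], h1⟩
  · push_neg at h1
    by_cases h2 : t < φ c + Real.pi/2
    · exact Or.inr (Or.inr ⟨by linarith [hc.1], h2⟩)
    · push_neg at h2
      have hteq : t = Real.pi := by linarith
      exact Or.inr (Or.inl (by rw [hteq]; exact ⟨by linarith [hb.1], hb.2⟩))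

/-- If a finite set of open unit semicircles covers a closed unit semicircle,
then two or three of them already cover it. -/
theorem semicircles_cover_closed_semicircle
    (S : Finset (EuclideanSpace ℝ (Fin 2))) (hS : ∀ v ∈ S, ‖v‖ = 1)
    (u : EuclideanSpace ℝ (Fin 2)) (hu : ‖u‖ = 1)
    (hcover : closedSemicircle u ⊆ ⋃ v ∈ S, openSemicircle v) :
    ∃ R ⊆ S, (R.card = 2 ∨ R.card = 3) ∧
      closedSemicircle u ⊆ ⋃ v ∈ R, openSemicircle v := by
  classical
  have hπ := Real.pi_pos
  have inner_expand : ∀ x y : EuclideanSpace ℝ (Fin 2), ⟪x, y⟫ = x 0 * y 0 + x 1 * y 1 := by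
    intro x y; simp [PiLp.inner_apply, Fin.sum_univ_two]; ring
  have norm_sq : ∀ x : EuclideanSpace ℝ (Fin 2), ‖x‖ = 1 ↔ x 0 ^2 + x 1 ^2 = 1 := by
    intro x
    have h := real_inner_self_eq_norm_sq x
    rw [inner_expand] at h
    constructor
    · intro hx; rw [hx] at h; nlinarith
    · intro hx; nlinarith [norm_nonneg x]
  have hu2 : u 0 ^2 + u 1 ^2 = 1 := (norm_sq u).1 hu
  set p : EuclideanSpace ℝ (Fin 2) := WithLp.toLp 2 ![-(u 1), u 0] with hp
  have hp0 : p 0 = -(u 1) := rfl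
  have hp1 : p 1 = u 0 := rfl
  set γ : ℝ → EuclideanSpace ℝ (Fin 2) :=
    fun t => Real.cos t • p + Real.sin t • u with hγdef
  have hγ : ∀ t i, γ t i = Real.cos t * p i + Real.sin t * u i := by
    intro t i; simp [hγdef]
  have hγu : ∀ t, ‖γ t‖ = 1 := by
    intro t
    rw [norm_sq, hγ, hγ, hp0, hp1]
    have hsc := Real.sin_sq_add_cos_sq t
    nlinarith [hsc, hu2]
  have hγcirc : ∀ t, γ t ∈ unitCircle := by
    intro t
    simp only [unitCircle, mem_sphere_zero_iff_norm]
    exact hγu t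
  -- angle function
  set Φ : EuclideanSpace ℝ (Fin 2) → ℝ := fun v => angleOf ⟪v, p⟫ ⟪v, u⟫ with hΦ
  have hΦspec : ∀ v ∈ S,
      Real.cos (Φ v) = ⟪v, p⟫ ∧ Real.sin (Φ v) = ⟪v, u⟫ ∧
      -(Real.pi/2) ≤ Φ v ∧ Φ v < 3*Real.pi/2 := by
    intro v hv
    have hv2 : v 0 ^2 + v 1 ^2 = 1 := (norm_sq v).1 (hS v hv)
    apply angle_spec
    rw [inner_expand, inner_expand, hp0, hp1]
    linear_combination (v 0 ^2 + v 1 ^2) * hu2 + hv2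
  -- key equivalence
  have hmem : ∀ v ∈ S, ∀ t : ℝ, 0 ≤ t → t ≤ Real.pi →
      (γ t ∈ openSemicircle v ↔ (Φ v - Real.pi/2 < t ∧ t < Φ v + Real.pi/2)) := by
    intro v hv t ht0 htπ
    obtain ⟨hcφ, hsφ, hφ1, hφ2⟩ := hΦspec v hv
    have hval : ⟪v, γ t⟫ = Real.cos (t - Φ v) := by
      rw [Real.cos_sub, hcφ, hsφ, inner_expand, inner_expand, inner_expand,
        hγ, hγ, hp0, hp1]
      ring
    have hms : γ t ∈ openSemicircle v ↔ 0 < ⟪v, γ t⟫ := by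
      simp [openSemicircle, hγcirc t]
    rw [hms, hval, cos_pos_iff_near (by linarith) (by linarith)]
    constructor
    · intro ⟨h1, h2⟩; exact ⟨by linarith, by linarith⟩
    · intro ⟨h1, h2⟩; exact ⟨by linarith, by linarith⟩
  -- surjectivity of γ onto closed semicircle
  have hsurj : ∀ x ∈ closedSemicircle u, ∃ t, 0 ≤ t ∧ t ≤ Real.pi ∧ γ t = x := by
    intro x hx
    obtain ⟨hxc, hxu⟩ := hx
    have hx2 : x 0 ^2 + x 1 ^2 = 1 := by
      rw [← norm_sq]
      simpa [unitCircle, mem_sphere_zero_iff_norm] using hxc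
    rw [inner_expand] at hxu
    set A : ℝ := -(u 1) * x 0 + u 0 * x 1 with hA
    set B : ℝ := u 0 * x 0 + u 1 * x 1 with hB
    have hAB : A^2 + B^2 = 1 := by
      simp only [hA, hB]
      linear_combination (x 0 ^2 + x 1 ^2) * hu2 + hx2
    have hA1 : -1 ≤ A := by nlinarith
    have hA2 : A ≤ 1 := by nlinarith
    refine ⟨Real.arccos A, Real.arccos_nonneg A, Real.arccos_le_pi A, ?_⟩
    have hcos : Real.cos (Real.arccos A) = A := Real.cos_arccos hA1 hA2
    have hsin : Real.sin (Real.arccos A) = B := by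
      rw [Real.sin_arccos]
      rw [show 1 - A^2 = B^2 by linarith]
      exact Real.sqrt_sq hxu
    ext i
    rw [hγ, hcos, hsin]
    fin_cases i
    · show A * p 0 + B * u 0 = x 0
      rw [hp0]; simp only [hA, hB]
      linear_combination x 0 * hu2
    · show A * p 1 + B * u 1 = x 1
      rw [hp1]; simp only [hA, hB]
      linear_combination x 1 * hu2
  -- apply interval lemma
  have hintcover : ∀ t : ℝ, 0 ≤ t → t ≤ Real.pi →
      ∃ v ∈ S, Φ v - Real.pi/2 < t ∧ t < Φ v + Real.pi/2 := by
    intro t ht0 htπ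
    have hmemC : γ t ∈ closedSemicircle u := by
      refine ⟨hγcirc t, ?_⟩
      rw [inner_expand, hγ, hγ, hp0, hp1]
      have : u 0 * (Real.cos t * -(u 1) + Real.sin t * u 0)
          + u 1 * (Real.cos t * u 0 + Real.sin t * u 1)
          = Real.sin t * (u 0 ^2 + u 1 ^2) := by ring
      rw [this, hu2, mul_one]
      exact Real.sin_nonneg_of_nonneg_of_le_pi ht0 htπ
    have := hcover hmemC
    simp only [Set.mem_iUnion, exists_prop] at this
    obtain ⟨v, hvS, hvmem⟩ := this
    exact ⟨v, hvS, (hmem v hvS t ht0 htπ).1 hvmem⟩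
  obtain ⟨a, haS, b, hbS, c, hcS, haφ, hbφ, hcov3⟩ :=
    three_intervals_cover S Φ hintcover
  have hab : a ≠ b := by intro hh; rw [hh] at haφ; linarith
  refine ⟨{a, b, c}, ?_, ?_, ?_⟩
  · intro x hx
    simp only [Finset.mem_insert, Finset.mem_singleton] at hx
    rcases hx with rfl | rfl | rfl <;> assumption
  · have hle3 : ({a, b, c} : Finset _).card ≤ 3 := by
      apply le_trans (Finset.card_insert_le _ _)
      have := Finset.card_insert_le b ({c} : Finset _)
      simp at this ⊢
      omega
    have hge2 : 2 ≤ ({a, b, c} : Finset _).card := by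
      have hsub : ({a, b} : Finset _) ⊆ ({a, b, c} : Finset _) := by
        intro x hx
        simp only [Finset.mem_insert, Finset.mem_singleton] at hx ⊢
        tauto
      have := Finset.card_le_card hsub
      rw [Finset.card_pair hab] at this
      exact this
    omega
  · intro x hx
    obtain ⟨t, ht0, htπ, rfl⟩ := hsurj x hx
    simp only [Set.mem_iUnion, exists_prop]
    rcases hcov3 t ht0 htπ with h | h | h
    · exact ⟨a, by simp, (hmem a haS t ht0 htπ).2 h⟩
    · exact ⟨b, by simp, (hmem b hbS t ht0 htπ).2 h⟩
    · exact ⟨c, by simp, (hmem c hcS t ht0 htπ).2 h⟩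
end

section
/- A set R of four open unit semicircles that covers the unit circle S^1 is minimal (i.e., removing any one member yields a family that no longer covers S^1) if and only if R consists of two antipodal pairs of open unit semicircles. -/
open scoped RealInnerProductSpace

noncomputable local instance : DecidableEq (EuclideanSpace ℝ (Fin 2)) :=
  Classical.decEq _

open Real

namespace FourSemicircle

/-- The point of the circle at angle `u`. -/
noncomputable def pt (u : ℝ) : EuclideanSpace ℝ (Fin 2) :=
  (WithLp.equiv 2 (Fin 2 → ℝ)).symm ![Real.cos u, Real.sin u]

lemma pt_apply0 (u : ℝ) : pt u 0 = Real.cos u := rfl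
lemma pt_apply1 (u : ℝ) : pt u 1 = Real.sin u := rfl

lemma norm_pt (u : ℝ) : ‖pt u‖ = 1 := by
  rw [EuclideanSpace.norm_eq]
  simp only [Fin.sum_univ_two, pt_apply0, pt_apply1, Real.norm_eq_abs, sq_abs]
  rw [← Real.sqrt_one]
  congr 1
  simpa using Real.sin_sq_add_cos_sq u

lemma pt_mem (u : ℝ) : pt u ∈ unitCircle := by
  simp [unitCircle, norm_pt u]

lemma exists_angle (v : EuclideanSpace ℝ (Fin 2)) (hv : ‖v‖ = 1) :
    ∃ θ ∈ Set.Ico 0 (2 * π), v 0 = Real.cos θ ∧ v 1 = Real.sin θ := by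
  set z : ℂ := ⟨v 0, v 1⟩ with hz
  have habs : ‖z‖ = 1 := by
    rw [EuclideanSpace.norm_eq] at hv
    simpa [Complex.norm_def, Complex.normSq, Fin.sum_univ_two, Real.norm_eq_abs, sq_abs,
      hz, pow_two] using hv
  have hz0 : z ≠ 0 := by intro h; rw [h] at habs; simp at habs
  have hc : Real.cos (Complex.arg z) = v 0 := by rw [Complex.cos_arg hz0, habs]; simp [hz]
  have hs : Real.sin (Complex.arg z) = v 1 := by rw [Complex.sin_arg, habs]; simp [hz]
  have hmem := Complex.arg_mem_Ioc z
  rcases le_or_gt 0 (Complex.arg z) with h | h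
  · exact ⟨Complex.arg z, ⟨h, lt_of_le_of_lt hmem.2 (by linarith [Real.pi_pos])⟩, hc.symm, hs.symm⟩
  · refine ⟨Complex.arg z + 2 * π, ⟨by linarith [hmem.1], by linarith⟩, ?_, ?_⟩
    · rw [Real.cos_add_two_pi]; exact hc.symm
    · rw [Real.sin_add_two_pi]; exact hs.symm

lemma inner_eq (v x : EuclideanSpace ℝ (Fin 2)) : ⟪v, x⟫ = v 0 * x 0 + v 1 * x 1 := by
  simp [PiLp.inner_apply, Fin.sum_univ_two]; ring

lemma inner_pt (v x : EuclideanSpace ℝ (Fin 2)) (a b : ℝ)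
    (hv0 : v 0 = Real.cos a) (hv1 : v 1 = Real.sin a)
    (hx0 : x 0 = Real.cos b) (hx1 : x 1 = Real.sin b) :
    ⟪v, x⟫ = Real.cos (b - a) := by
  rw [inner_eq, hv0, hv1, hx0, hx1, Real.cos_sub]; ring

lemma vec_ext (v w : EuclideanSpace ℝ (Fin 2)) (h0 : v 0 = w 0) (h1 : v 1 = w 1) : v = w := by
  ext k
  fin_cases k
  · exact h0
  · exact h1

lemma cos_nonpos_pos {a : ℝ} (h1 : π / 2 ≤ a) (h2 : a ≤ 3 * π / 2) : Real.cos a ≤ 0 :=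
  Real.cos_nonpos_of_pi_div_two_le_of_le h1 (by linarith)

lemma cos_nonpos_neg {a : ℝ} (h1 : -(3 * π / 2) ≤ a) (h2 : a ≤ -(π / 2)) : Real.cos a ≤ 0 := by
  rw [← Real.cos_neg]
  exact cos_nonpos_pos (by linarith) (by linarith)

lemma cos_pos' {a : ℝ} (h1 : -(π / 2) < a) (h2 : a < π / 2) : 0 < Real.cos a :=
  Real.cos_pos_of_mem_Ioo ⟨h1, h2⟩

/-- Three open semicircular arcs with all cyclic gaps `< π` cover the circle. -/
lemma cover3 (s1 s2 s3 : ℝ) (h12 : s1 ≤ s2) (h23 : s2 ≤ s3)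
    (g1 : s2 - s1 < π) (g2 : s3 - s2 < π) (g3 : s1 + 2 * π - s3 < π) (u : ℝ) :
    0 < Real.cos (u - s1) ∨ 0 < Real.cos (u - s2) ∨ 0 < Real.cos (u - s3) := by
  have hp : (0 : ℝ) < 2 * π := by positivity
  set u' := toIcoMod hp s1 u with hu'
  have hmem := toIcoMod_mem_Ico hp s1 u
  rw [Set.mem_Ico] at hmem
  have hcos : ∀ s : ℝ, Real.cos (u - s) = Real.cos (u' - s) := by
    intro s
    have h := toIcoMod_add_toIcoDiv_zsmul hp s1 u
    have h2 : u' + (toIcoDiv hp s1 u : ℝ) * (2 * π) = u := by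
      rw [← zsmul_eq_mul]; exact_mod_cast h
    have h3 : u - s = u' - s + (toIcoDiv hp s1 u : ℝ) * (2 * π) := by
      linarith
    rw [h3, Real.cos_add_int_mul_two_pi]
  rw [hcos s1, hcos s2, hcos s3]
  rcases le_or_gt u' s2 with h | h
  · rcases lt_or_ge (u' - s1) (π / 2) with h' | h'
    · exact Or.inl (cos_pos' (by linarith) h')
    · exact Or.inr (Or.inl (cos_pos' (by linarith) (by linarith)))
  · rcases le_or_gt u' s3 with h2' | h2'
    · rcases lt_or_ge (u' - s2) (π / 2) with h' | h'
      · exact Or.inr (Or.inl (cos_pos' (by linarith) h'))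
      · exact Or.inr (Or.inr (cos_pos' (by linarith) (by linarith)))
    · rcases lt_or_ge (u' - s3) (π / 2) with h' | h'
      · exact Or.inr (Or.inr (cos_pos' (by linarith) h'))
      · have : s3 > s1 + π := by linarith
        have hlow : -(π / 2) < u' - s1 - 2 * π := by linarith
        have hhi : u' - s1 - 2 * π < π / 2 := by linarith [hmem.2]
        have : (0 : ℝ) < Real.cos (u' - s1 - 2 * π) := cos_pos' hlow hhi
        rw [Real.cos_sub_two_pi] at this
        exact Or.inl this

/-- Key combinatorial lemma about four sorted angles. -/
lemma key (t : Fin 4 → ℝ) (hmono : Monotone t) (h0 : 0 ≤ t 0) (h3 : t 3 < 2 * π)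
    (hcov : ∀ u : ℝ, ∃ i, 0 < Real.cos (u - t i))
    (hmin : ∀ i : Fin 4, ∃ u : ℝ, ∀ j ≠ i, Real.cos (u - t j) ≤ 0) :
    t 2 = t 0 + π ∧ t 3 = t 1 + π := by
  have hpi := Real.pi_pos
  have m01 : t 0 ≤ t 1 := hmono (by decide : (0 : Fin 4) ≤ 1)
  have m12 : t 1 ≤ t 2 := hmono (by decide : (1 : Fin 4) ≤ 2)
  have m23 : t 2 ≤ t 3 := hmono (by decide : (2 : Fin 4) ≤ 3)
  -- Step A: all cyclic gaps are < π
  have hd1 : t 1 - t 0 < π := by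
    by_contra hcon
    push_neg at hcon
    obtain ⟨i, hi⟩ := hcov (t 0 + π / 2)
    have : Real.cos (t 0 + π / 2 - t i) ≤ 0 := by
      rcases eq_or_ne i 0 with rfl | hne
      · exact cos_nonpos_pos (by linarith) (by linarith)
      · have h1i : t 1 ≤ t i := hmono (by omega : (1 : Fin 4) ≤ i)
        have hi3 : t i ≤ t 3 := hmono (by omega : i ≤ 3)
        exact cos_nonpos_neg (by linarith) (by linarith)
    linarith
  have hd2 : t 2 - t 1 < π := by
    by_contra hcon
    push_neg at hcon
    obtain ⟨i, hi⟩ := hcov (t 1 + π / 2)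
    have : Real.cos (t 1 + π / 2 - t i) ≤ 0 := by
      rcases le_or_gt i 1 with hle | hlt
      · have h0i : t 0 ≤ t i := hmono (by omega : (0 : Fin 4) ≤ i)
        have hi1 : t i ≤ t 1 := hmono hle
        exact cos_nonpos_pos (by linarith) (by linarith)
      · have h2i : t 2 ≤ t i := hmono (by omega : (2 : Fin 4) ≤ i)
        have hi3 : t i ≤ t 3 := hmono (by omega : i ≤ 3)
        exact cos_nonpos_neg (by linarith) (by linarith)
    linarith
  have hd3 : t 3 - t 2 < π := by
    by_contra hcon
    push_neg at hcon
    obtain ⟨i, hi⟩ := hcov (t 2 + π / 2)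
    have : Real.cos (t 2 + π / 2 - t i) ≤ 0 := by
      rcases le_or_gt i 2 with hle | hlt
      · have h0i : t 0 ≤ t i := hmono (by omega : (0 : Fin 4) ≤ i)
        have hi2 : t i ≤ t 2 := hmono hle
        exact cos_nonpos_pos (by linarith) (by linarith)
      · have h3i : t 3 ≤ t i := hmono (by omega : (3 : Fin 4) ≤ i)
        have hi3 : t i ≤ t 3 := hmono (by omega : i ≤ 3)
        exact cos_nonpos_neg (by linarith) (by linarith)
    linarith
  have hd4 : t 0 + 2 * π - t 3 < π := by
    by_contra hcon
    push_neg at hcon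
    obtain ⟨i, hi⟩ := hcov (t 3 + π / 2)
    have : Real.cos (t 3 + π / 2 - t i) ≤ 0 := by
      have h0i : t 0 ≤ t i := hmono (by omega : (0 : Fin 4) ≤ i)
      have hi3 : t i ≤ t 3 := hmono (by omega : i ≤ 3)
      exact cos_nonpos_pos (by linarith) (by linarith)
    linarith
  -- Step B: merged gaps are ≥ π
  have hb0 : π ≤ t 1 + 2 * π - t 3 := by
    by_contra hcon
    push_neg at hcon
    obtain ⟨u, hu⟩ := hmin 0
    rcases cover3 (t 1) (t 2) (t 3) m12 m23 hd2 hd3 hcon u with h | h | h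
    · exact absurd h (not_lt.2 (hu 1 (by decide)))
    · exact absurd h (not_lt.2 (hu 2 (by decide)))
    · exact absurd h (not_lt.2 (hu 3 (by decide)))
  have hb1 : π ≤ t 2 - t 0 := by
    by_contra hcon
    push_neg at hcon
    obtain ⟨u, hu⟩ := hmin 1
    rcases cover3 (t 0) (t 2) (t 3) (le_trans m01 m12) m23 hcon hd3 hd4 u with h | h | h
    · exact absurd h (not_lt.2 (hu 0 (by decide)))
    · exact absurd h (not_lt.2 (hu 2 (by decide)))
    · exact absurd h (not_lt.2 (hu 3 (by decide)))
  have hb2 : π ≤ t 3 - t 1 := by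
    by_contra hcon
    push_neg at hcon
    obtain ⟨u, hu⟩ := hmin 2
    rcases cover3 (t 0) (t 1) (t 3) m01 (le_trans m12 m23) hd1 hcon hd4 u with h | h | h
    · exact absurd h (not_lt.2 (hu 0 (by decide)))
    · exact absurd h (not_lt.2 (hu 1 (by decide)))
    · exact absurd h (not_lt.2 (hu 3 (by decide)))
  have hb3 : π ≤ t 0 + 2 * π - t 2 := by
    by_contra hcon
    push_neg at hcon
    obtain ⟨u, hu⟩ := hmin 3
    rcases cover3 (t 0) (t 1) (t 2) m01 m12 hd1 hd2 hcon u with h | h | h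
    · exact absurd h (not_lt.2 (hu 0 (by decide)))
    · exact absurd h (not_lt.2 (hu 1 (by decide)))
    · exact absurd h (not_lt.2 (hu 2 (by decide)))
  constructor <;> linarith

lemma image4 {α : Type*} [DecidableEq α] (g : Fin 4 → α) :
    Finset.image g Finset.univ = {g 0, g 1, g 2, g 3} := by
  rw [show (Finset.univ : Finset (Fin 4)) = {0, 1, 2, 3} from by decide]
  simp [Finset.image_insert]

/-- A point perpendicular to `w` on the non-`v` side. -/
lemma exists_perp (v w : EuclideanSpace ℝ (Fin 2)) (hw : ‖w‖ = 1) :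
    ∃ x ∈ unitCircle, ⟪v, x⟫ ≤ 0 ∧ ⟪w, x⟫ = 0 ∧ ⟪-w, x⟫ = 0 := by
  set y : EuclideanSpace ℝ (Fin 2) := (WithLp.equiv 2 (Fin 2 → ℝ)).symm ![-(w 1), w 0] with hy
  have hy0 : y 0 = -(w 1) := rfl
  have hy1 : y 1 = w 0 := rfl
  have hny : ‖y‖ = 1 := by
    rw [EuclideanSpace.norm_eq] at hw ⊢
    rw [← hw]
    simp only [Fin.sum_univ_two, hy0, hy1, Real.norm_eq_abs, sq_abs, norm_neg]
    ring_nf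
  have hwy : ⟪w, y⟫ = 0 := by rw [inner_eq, hy0, hy1]; ring
  rcases le_or_gt ⟪v, y⟫ 0 with h | h
  · refine ⟨y, by simp [unitCircle, hny], h, hwy, ?_⟩
    rw [inner_neg_left, hwy, neg_zero]
  · refine ⟨-y, by simp [unitCircle, hny], ?_, ?_, ?_⟩
    · rw [inner_neg_right]; linarith
    · rw [inner_neg_right, hwy, neg_zero]
    · rw [inner_neg_left, inner_neg_right, hwy]; simp

end FourSemicircle

open FourSemicircle

/-- A set of four open unit semicircles covering `S¹` is a minimal cover
(removing any member destroys the covering property) iff it consists of two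
antipodal pairs of open unit semicircles. -/
theorem four_semicircle_cover_minimal_iff
    (R : Finset (EuclideanSpace ℝ (Fin 2))) (hR : ∀ v ∈ R, ‖v‖ = 1)
    (hcard : R.card = 4)
    (hcover : unitCircle ⊆ ⋃ v ∈ R, openSemicircle v) :
    (∀ s ∈ R, ¬ unitCircle ⊆ ⋃ v ∈ R.erase s, openSemicircle v) ↔
      ∃ v w : EuclideanSpace ℝ (Fin 2), R = {v, -v, w, -w} := by
  constructor
  · -- minimal → antipodal pairs
    intro H
    -- extract four distinct elements
    obtain ⟨a, s, has, rfl, hs3⟩ := Finset.card_eq_succ.1 hcard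
    obtain ⟨b, c, d, hbc, hbd, hcd, rfl⟩ := Finset.card_eq_three.1 hs3
    have hab : a ≠ b := fun h => has (by simp [h])
    have hac : a ≠ c := fun h => has (by simp [h])
    have had : a ≠ d := fun h => has (by simp [h])
    set f : Fin 4 → EuclideanSpace ℝ (Fin 2) := fun i => [a, b, c, d].get i with hf
    have hf0 : f 0 = a := rfl
    have hf1 : f 1 = b := rfl
    have hf2 : f 2 = c := rfl
    have hf3 : f 3 = d := rfl
    have hnodup : ([a, b, c, d] : List (EuclideanSpace ℝ (Fin 2))).Nodup := by
      simp [hab, hac, had, hbc, hbd, hcd]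
    have hinj : Function.Injective f := List.nodup_iff_injective_get.mp hnodup
    have hRf : (insert a {b, c, d} : Finset (EuclideanSpace ℝ (Fin 2))) =
        Finset.image f Finset.univ := by
      rw [image4 f, hf0, hf1, hf2, hf3]
    have hmemR : ∀ i, f i ∈ (insert a {b, c, d} : Finset (EuclideanSpace ℝ (Fin 2))) := by
      intro i; rw [hRf]; exact Finset.mem_image_of_mem f (Finset.mem_univ i)
    have hangle : ∀ i, ∃ u ∈ Set.Ico 0 (2 * π), f i 0 = Real.cos u ∧ f i 1 = Real.sin u :=
      fun i => exists_angle (f i) (hR (f i) (hmemR i))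
    choose θ hθmem hθ0 hθ1 using hangle
    -- covering in angular form
    have hcov' : ∀ u : ℝ, ∃ i, 0 < Real.cos (u - θ i) := by
      intro u
      have hx := hcover (pt_mem u)
      simp only [Set.mem_iUnion, exists_prop] at hx
      obtain ⟨v, hvR, hxv⟩ := hx
      rw [hRf, Finset.mem_image] at hvR
      obtain ⟨i, -, rfl⟩ := hvR
      refine ⟨i, ?_⟩
      have := hxv.2
      rwa [inner_pt (f i) (pt u) (θ i) u (hθ0 i) (hθ1 i) (pt_apply0 u) (pt_apply1 u)] at this
    -- minimality in angular form
    have hmin' : ∀ i : Fin 4, ∃ u : ℝ, ∀ j ≠ i, Real.cos (u - θ j) ≤ 0 := by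
      intro i
      have hns := H (f i) (hmemR i)
      obtain ⟨x, hxU, hxn⟩ := Set.not_subset.1 hns
      have hxnorm : ‖x‖ = 1 := by simpa [unitCircle] using hxU
      obtain ⟨u, -, hx0, hx1⟩ := exists_angle x hxnorm
      refine ⟨u, fun j hj => ?_⟩
      have hmem : f j ∈ Finset.erase (insert a {b, c, d}) (f i) :=
        Finset.mem_erase.2 ⟨fun h => hj (hinj h), hmemR j⟩
      have : x ∉ openSemicircle (f j) := by
        intro hxs
        exact hxn (Set.mem_biUnion hmem hxs)
      have hle : ¬ 0 < ⟪f j, x⟫ := fun h => this ⟨hxU, h⟩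
      rw [inner_pt (f j) x (θ j) u (hθ0 j) (hθ1 j) hx0 hx1] at hle
      linarith [not_lt.1 hle]
    -- sort the angles
    set σ := Tuple.sort θ with hσ
    have hmono : Monotone (θ ∘ σ) := Tuple.monotone_sort θ
    obtain ⟨ht2, ht3⟩ := key (θ ∘ σ) hmono (hθmem (σ 0)).1 (hθmem (σ 3)).2
      (fun u => by
        obtain ⟨i, hi⟩ := hcov' u
        exact ⟨σ.symm i, by simpa using hi⟩)
      (fun i => by
        obtain ⟨u, hu⟩ := hmin' (σ i)
        exact ⟨u, fun j hj => hu (σ j) (fun h => hj (σ.injective h))⟩)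
    -- antipodal pairs
    have hanti : ∀ i j : Fin 4, θ i = θ j + π → f i = -f j := by
      intro i j h
      refine vec_ext _ _ ?_ ?_
      · show f i 0 = -(f j 0)
        rw [hθ0 i, hθ0 j, h, Real.cos_add_pi]
      · show f i 1 = -(f j 1)
        rw [hθ1 i, hθ1 j, h, Real.sin_add_pi]
    have h20 : f (σ 2) = -f (σ 0) := hanti _ _ ht2
    have h31 : f (σ 3) = -f (σ 1) := hanti _ _ ht3
    refine ⟨f (σ 0), f (σ 1), ?_⟩
    have himg : Finset.image f Finset.univ = Finset.image (f ∘ σ) Finset.univ := by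
      ext x
      simp only [Finset.mem_image, Finset.mem_univ, true_and]
      constructor
      · rintro ⟨i, rfl⟩; exact ⟨σ.symm i, by simp⟩
      · rintro ⟨i, rfl⟩; exact ⟨σ i, rfl⟩
    rw [hRf, himg, image4 (f ∘ σ)]
    simp only [Function.comp_apply, h20, h31]
    ext x
    simp only [Finset.mem_insert, Finset.mem_singleton]
    tauto
  · -- antipodal pairs → minimal
    rintro ⟨v, w, rfl⟩ s hs hsub
    have hv : ‖v‖ = 1 := hR v (by simp)
    have hw : ‖w‖ = 1 := hR w (by simp)
    have hs4 : s = v ∨ s = -v ∨ s = w ∨ s = -w := by simpa using hs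
    have main : ∀ p q : EuclideanSpace ℝ (Fin 2), ‖q‖ = 1 →
        (∀ u ∈ Finset.erase ({v, -v, w, -w} : Finset (EuclideanSpace ℝ (Fin 2))) s,
          u = p ∨ u = q ∨ u = -q) → False := by
      intro p q hq hmem
      obtain ⟨x, hxU, hp, hq0, hq0'⟩ := exists_perp p q hq
      have hx := hsub hxU
      simp only [Set.mem_iUnion, exists_prop] at hx
      obtain ⟨u, huR, hxu⟩ := hx
      have hupos := hxu.2
      rcases hmem u huR with rfl | rfl | rfl
      · linarith
      · rw [hq0] at hupos; linarith
      · rw [hq0'] at hupos; linarith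
    rcases hs4 with rfl | rfl | rfl | rfl
    · refine main (-s) w hw ?_
      intro u hu
      have := Finset.mem_erase.1 hu
      have h4 : u = s ∨ u = -s ∨ u = w ∨ u = -w := by simpa using this.2
      rcases h4 with rfl | h | h | h
      · exact absurd rfl this.1
      · tauto
      · tauto
      · tauto
    · refine main v w hw ?_
      intro u hu
      have := Finset.mem_erase.1 hu
      have h4 : u = v ∨ u = -v ∨ u = w ∨ u = -w := by simpa using this.2
      rcases h4 with h | rfl | h | h
      · tauto
      · exact absurd rfl this.1
      · tauto
      · tauto
    · refine main (-s) v hv ?_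
      intro u hu
      have := Finset.mem_erase.1 hu
      have h4 : u = v ∨ u = -v ∨ u = s ∨ u = -s := by simpa using this.2
      rcases h4 with h | h | rfl | h
      · tauto
      · tauto
      · exact absurd rfl this.1
      · tauto
    · refine main w v hv ?_
      intro u hu
      have := Finset.mem_erase.1 hu
      have h4 : u = v ∨ u = -v ∨ u = w ∨ u = -w := by simpa using this.2
      rcases h4 with h | h | h | rfl
      · tauto
      · tauto
      · tauto
      · exact absurd rfl this.1
end

section
/- Let S be a set of at least 5 distinct open unit semicircles whose union covers the unit circle S^1. Then there exists a subset R ⊂ S with |R| = 3 whose union covers S^1. -/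
open scoped RealInnerProductSpace
open Real

noncomputable def pt (φ : ℝ) : EuclideanSpace ℝ (Fin 2) :=
  (WithLp.equiv 2 (Fin 2 → ℝ)).symm ![Real.cos φ, Real.sin φ]

lemma pt_norm (φ : ℝ) : ‖pt φ‖ = 1 := by
  rw [EuclideanSpace.norm_eq]
  simp [pt, Fin.sum_univ_two, sq_abs]

lemma pt_inner (α β : ℝ) : ⟪pt α, pt β⟫ = Real.cos (α - β) := by
  rw [Real.cos_sub]
  simp [pt, PiLp.inner_apply, Fin.sum_univ_two, RCLike.inner_apply, mul_comm]

lemma sq_add_sq_eq_one (v : EuclideanSpace ℝ (Fin 2)) (hv : ‖v‖ = 1) :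
    (v 0)^2 + (v 1)^2 = 1 := by
  have h := EuclideanSpace.norm_eq v
  rw [Fin.sum_univ_two, hv] at h
  have h2 : ‖v 0‖^2 + ‖v 1‖^2 = 1 := by
    nlinarith [Real.sq_sqrt (by positivity : (0:ℝ) ≤ ‖v 0‖^2 + ‖v 1‖^2)]
  simpa [sq_abs] using h2

lemma exists_angle (v : EuclideanSpace ℝ (Fin 2)) (hv : ‖v‖ = 1) :
    ∃ θ, 0 ≤ θ ∧ θ < 2*π ∧ v = pt θ := by
  set z : ℂ := ⟨v 0, v 1⟩ with hz
  have h1 : (v 0)^2 + (v 1)^2 = 1 := sq_add_sq_eq_one v hv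
  have habs : ‖z‖ = 1 := by
    rw [Complex.norm_def, Complex.normSq_apply]
    simp only [hz]
    rw [show v 0 * v 0 + v 1 * v 1 = 1 by nlinarith]
    exact Real.sqrt_one
  have hz0 : z ≠ 0 := by
    intro h; rw [h] at habs; simp at habs
  have hcos : Real.cos (Complex.arg z) = v 0 := by
    rw [Complex.cos_arg hz0, habs]; simp [hz]
  have hsin : Real.sin (Complex.arg z) = v 1 := by
    rw [Complex.sin_arg, habs]; simp [hz]
  have harg := Complex.arg_mem_Ioc z
  have hpi := Real.pi_pos
  refine ⟨if 0 ≤ Complex.arg z then Complex.arg z else Complex.arg z + 2*π, ?_, ?_, ?_⟩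
  · split <;> [skip; skip] <;> simp_all <;> linarith [harg.1]
  · split
    · linarith [harg.2]
    · push_neg at *; linarith [harg.2]
  · have hc : Real.cos (if 0 ≤ Complex.arg z then Complex.arg z else Complex.arg z + 2*π) = v 0 := by
      split
      · exact hcos
      · rw [Real.cos_add_two_pi]; exact hcos
    have hs : Real.sin (if 0 ≤ Complex.arg z then Complex.arg z else Complex.arg z + 2*π) = v 1 := by
      split
      · exact hsin
      · rw [Real.sin_add_two_pi]; exact hsin
    ext i
    fin_cases i
    · simp only [pt, WithLp.equiv_symm_apply, WithLp.ofLp_toLp, Matrix.cons_val_zero]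
      exact hc.symm
    · simp only [pt, WithLp.equiv_symm_apply, WithLp.ofLp_toLp, Matrix.cons_val_one, Matrix.head_cons]
      exact hs.symm


def Covers (B : Finset ℝ) : Prop := ∀ φ : ℝ, ∃ θ ∈ B, 0 < Real.cos (φ - θ)

lemma tripleCover (a b c : ℝ) (hab : a < b) (hbc : b < c)
    (g1 : b - a < π) (g2 : c - b < π) (g3 : a + 2*π - c < π) :
    Covers {a, b, c} := by
  intro φ
  have hpi := Real.pi_pos
  have h2pi : (0:ℝ) < 2*π := by linarith
  set ψ := toIcoMod h2pi a φ with hψ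
  have hmem : ψ ∈ Set.Ico a (a + 2*π) := toIcoMod_mem_Ico h2pi a φ
  have hkey : ∀ θ : ℝ, Real.cos (φ - θ) = Real.cos (ψ - θ) := by
    intro θ
    have : φ - ψ = toIcoDiv h2pi a φ • (2*π) := (self_sub_toIcoMod h2pi a φ)
    have hφ : φ = ψ + (toIcoDiv h2pi a φ : ℤ) * (2*π) := by
      rw [zsmul_eq_mul] at this; linarith
    rw [hφ]
    rw [show ψ + (toIcoDiv h2pi a φ : ℤ) * (2*π) - θ = ψ - θ + (toIcoDiv h2pi a φ : ℤ) * (2*π) by ring]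
    exact Real.cos_add_int_mul_two_pi _ _
  have cpos : ∀ x : ℝ, -(π/2) < x → x < π/2 → 0 < Real.cos x := fun x h1 h2 =>
    Real.cos_pos_of_mem_Ioo ⟨h1, h2⟩
  rcases le_or_gt ψ ((a+b)/2) with h | h
  · refine ⟨a, by simp, ?_⟩
    rw [hkey]
    exact cpos _ (by linarith [hmem.1]) (by linarith)
  · rcases le_or_gt ψ ((b+c)/2) with h' | h'
    · refine ⟨b, by simp, ?_⟩
      rw [hkey]
      exact cpos _ (by linarith) (by linarith)
    · rcases le_or_gt ψ ((c+a+2*π)/2) with h'' | h''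
      · refine ⟨c, by simp, ?_⟩
        rw [hkey]
        exact cpos _ (by linarith) (by linarith)
      · refine ⟨a, by simp, ?_⟩
        rw [hkey, show ψ - a = ψ - a - 2*π + 2*π by ring, Real.cos_add_two_pi]
        exact cpos _ (by linarith) (by linarith [hmem.2])

lemma blocked (A : Finset ℝ) (m x : ℝ) (hA : ∀ θ ∈ A, m ≤ θ ∧ θ < m + 2*π)
    (hx1 : m ≤ x) (hx2 : x ≤ m + π) (hb : ∀ θ ∈ A, θ ≤ x ∨ x + π ≤ θ)
    (hc : Covers A) : False := by
  have hpi := Real.pi_pos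
  obtain ⟨θ, hθ, hpos⟩ := hc (x + π/2)
  obtain ⟨hm, hm2⟩ := hA θ hθ
  rcases hb θ hθ with h | h
  · have : Real.cos (x + π/2 - θ) ≤ 0 :=
      Real.cos_nonpos_of_pi_div_two_le_of_le (by linarith) (by linarith)
    linarith
  · have : Real.cos (θ - (x + π/2)) ≤ 0 :=
      Real.cos_nonpos_of_pi_div_two_le_of_le (by linarith) (by linarith)
    rw [← Real.cos_neg, neg_sub] at this
    linarith

lemma card_three (a b c : ℝ) (hab : a < b) (hbc : b < c) :
    ({a, b, c} : Finset ℝ).card = 3 := by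
  rw [Finset.card_insert_of_notMem (by simp [hab.ne, (hab.trans hbc).ne]),
    Finset.card_insert_of_notMem (by simp [hbc.ne])]
  simp

lemma main_comb (A : Finset ℝ) (hA : ∀ θ ∈ A, 0 ≤ θ ∧ θ < 2*π)
    (hcard : 5 ≤ A.card) (hc : Covers A) :
    ∃ B ⊆ A, B.card = 3 ∧ Covers B := by
  have hpi := Real.pi_pos
  have hne : A.Nonempty := Finset.card_pos.mp (by omega)
  set m := A.min' hne with hm
  have hmA : m ∈ A := A.min'_mem hne
  have hmin : ∀ θ ∈ A, m ≤ θ := fun θ h => A.min'_le θ h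
  have hA' : ∀ θ ∈ A, m ≤ θ ∧ θ < m + 2*π := fun θ h =>
    ⟨hmin θ h, lt_of_lt_of_le (hA θ h).2 (by linarith [(hA m hmA).1])⟩
  -- B2 : points in (m, m+π)
  set B2 := A.filter (fun θ => m < θ ∧ θ < m + π) with hB2
  have hB2ne : B2.Nonempty := by
    rw [Finset.filter_nonempty_iff]
    by_contra hcon
    push_neg at hcon
    refine blocked A m m hA' le_rfl (by linarith) (fun θ hθ => ?_) hc
    rcases le_or_gt θ m with h | h
    · exact Or.inl h
    · exact Or.inr (by linarith [hcon θ hθ h])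
  set p2 := B2.max' hB2ne with hp2
  have hp2B : p2 ∈ B2 := B2.max'_mem hB2ne
  have hp2A : p2 ∈ A := (Finset.mem_filter.mp hp2B).1
  obtain ⟨hmp2, hp2pi⟩ : m < p2 ∧ p2 < m + π := (Finset.mem_filter.mp hp2B).2
  have hp2max : ∀ θ ∈ A, m < θ → θ < m + π → θ ≤ p2 := fun θ h h1 h2 =>
    B2.le_max' θ (Finset.mem_filter.mpr ⟨h, h1, h2⟩)
  -- B3 : points in (p2, p2+π)
  set B3 := A.filter (fun θ => p2 < θ ∧ θ < p2 + π) with hB3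
  have hB3ne : B3.Nonempty := by
    rw [Finset.filter_nonempty_iff]
    by_contra hcon
    push_neg at hcon
    refine blocked A m p2 hA' (by linarith) (by linarith) (fun θ hθ => ?_) hc
    rcases le_or_gt θ p2 with h | h
    · exact Or.inl h
    · exact Or.inr (by linarith [hcon θ hθ h])
  have hB3lb : ∀ θ ∈ B3, m + π ≤ θ := by
    intro θ hθ
    obtain ⟨hθA, hθ1, hθ2⟩ := Finset.mem_filter.mp hθ
    by_contra hcon
    push_neg at hcon
    exact absurd (hp2max θ hθA (by linarith) hcon) (not_le.mpr hθ1)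
  by_cases hcase : ∃ q ∈ B3, m + π < q
  · obtain ⟨q, hqB, hq⟩ := hcase
    obtain ⟨hqA, hq1, hq2⟩ := Finset.mem_filter.mp hqB
    refine ⟨{m, p2, q}, ?_, card_three m p2 q hmp2 hq1, ?_⟩
    · intro θ hθ
      simp only [Finset.mem_insert, Finset.mem_singleton] at hθ
      rcases hθ with rfl | rfl | rfl <;> assumption
    · exact tripleCover m p2 q hmp2 hq1 (by linarith) (by linarith) (by linarith)
  · push_neg at hcase
    have hB3eq : ∀ θ ∈ B3, θ = m + π := fun θ h =>
      le_antisymm (hcase θ h) (hB3lb θ h)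
    obtain ⟨q0, hq0⟩ := hB3ne
    have hqA : m + π ∈ A := by
      have := hB3eq q0 hq0; rw [← this]; exact (Finset.mem_filter.mp hq0).1
    have hA4 : ∀ θ ∈ A, ¬(m + π < θ ∧ θ < p2 + π) := by
      intro θ hθ ⟨h1, h2⟩
      have : θ ∈ B3 := Finset.mem_filter.mpr ⟨hθ, by linarith, h2⟩
      linarith [hB3eq θ this]
    -- B4 : points in (m+π, m+2π)
    set B4 := A.filter (fun θ => m + π < θ) with hB4
    have hB4ne : B4.Nonempty := by
      rw [Finset.filter_nonempty_iff]
      by_contra hcon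
      push_neg at hcon
      refine blocked A m (m + π) hA' (by linarith) le_rfl (fun θ hθ => ?_) hc
      exact Or.inl (hcon θ hθ)
    set r := B4.min' hB4ne with hr
    have hrB : r ∈ B4 := B4.min'_mem hB4ne
    have hrA : r ∈ A := (Finset.mem_filter.mp hrB).1
    have hr1 : m + π < r := (Finset.mem_filter.mp hrB).2
    have hr2 : r < m + 2*π := (hA' r hrA).2
    have hrmin : ∀ θ ∈ A, m + π < θ → r ≤ θ := fun θ h h1 =>
      B4.min'_le θ (Finset.mem_filter.mpr ⟨h, h1⟩)
    have hrp2 : p2 + π ≤ r := by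
      by_contra hcon
      push_neg at hcon
      exact hA4 r hrA ⟨hr1, hcon⟩
    rcases lt_or_eq_of_le hrp2 with hgt | heq
    · refine ⟨{p2, m + π, r}, ?_, card_three _ _ _ (by linarith) hr1, ?_⟩
      · intro θ hθ
        simp only [Finset.mem_insert, Finset.mem_singleton] at hθ
        rcases hθ with rfl | rfl | rfl <;> assumption
      · exact tripleCover _ _ _ (by linarith) hr1 (by linarith) (by linarith) (by linarith)
    · -- r = p2 + π ; pick a fifth point s
      have hsub : ({m, p2, m + π, r} : Finset ℝ) ⊆ A := by
        intro θ hθ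
        simp only [Finset.mem_insert, Finset.mem_singleton] at hθ
        rcases hθ with rfl | rfl | rfl | rfl <;> assumption
      have hsne : (A \ {m, p2, m + π, r}).Nonempty := by
        rw [← Finset.card_pos]
        have h4 : ({m, p2, m + π, r} : Finset ℝ).card ≤ 4 := by
          apply le_trans (Finset.card_insert_le _ _)
          apply Nat.succ_le_succ
          apply le_trans (Finset.card_insert_le _ _)
          apply Nat.succ_le_succ
          apply le_trans (Finset.card_insert_le _ _)
          simp
        have := Finset.le_card_sdiff ({m, p2, m + π, r} : Finset ℝ) A
        omega
      obtain ⟨s, hs⟩ := hsne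
      obtain ⟨hsA, hsnot⟩ := Finset.mem_sdiff.mp hs
      simp only [Finset.mem_insert, Finset.mem_singleton] at hsnot
      push_neg at hsnot
      obtain ⟨hsm, hsp2, hsq, hsr⟩ := hsnot
      have hsm' : m < s := lt_of_le_of_ne (hmin s hsA) (Ne.symm hsm)
      rcases lt_trichotomy s (m + π) with hlt | heq2 | hgt2
      · -- s < m + π  ⇒ s < p2
        have hsle : s ≤ p2 := hp2max s hsA hsm' hlt
        have hslt : s < p2 := lt_of_le_of_ne hsle hsp2
        refine ⟨{s, m + π, r}, ?_, card_three _ _ _ (by linarith) hr1, ?_⟩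
        · intro θ hθ
          simp only [Finset.mem_insert, Finset.mem_singleton] at hθ
          rcases hθ with rfl | rfl | rfl <;> assumption
        · exact tripleCover _ _ _ (by linarith) hr1 (by linarith) (by linarith) (by linarith)
      · exact absurd heq2 hsq
      · -- s > m + π ⇒ s > r
        have hsge : r ≤ s := hrmin s hsA hgt2
        have hsgt : r < s := lt_of_le_of_ne hsge (Ne.symm hsr)
        have hs2 : s < m + 2*π := (hA' s hsA).2
        refine ⟨{p2, m + π, s}, ?_, card_three _ _ _ (by linarith) (by linarith), ?_⟩
        · intro θ hθ
          simp only [Finset.mem_insert, Finset.mem_singleton] at hθ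
          rcases hθ with rfl | rfl | rfl <;> assumption
        · exact tripleCover p2 (m + π) s (by linarith) (by linarith) (by linarith)
            (by linarith) (by linarith)


noncomputable def ang (v : EuclideanSpace ℝ (Fin 2)) : ℝ :=
  if h : ‖v‖ = 1 then (exists_angle v h).choose else 0

lemma ang_spec (v : EuclideanSpace ℝ (Fin 2)) (hv : ‖v‖ = 1) :
    0 ≤ ang v ∧ ang v < 2*π ∧ v = pt (ang v) := by
  rw [ang, dif_pos hv]
  exact (exists_angle v hv).choose_spec

/-- If at least five distinct open unit semicircles cover `S¹`, then some
three of them already cover `S¹`. -/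
theorem three_of_five_semicircles_cover
    (S : Finset (EuclideanSpace ℝ (Fin 2))) (hS : ∀ v ∈ S, ‖v‖ = 1)
    (hcard : 5 ≤ S.card)
    (hcover : unitCircle ⊆ ⋃ v ∈ S, openSemicircle v) :
    ∃ R ⊆ S, R.card = 3 ∧ unitCircle ⊆ ⋃ v ∈ R, openSemicircle v := by
  classical
  have hinj : Set.InjOn ang S := by
    intro v hv w hw h
    have h1 := (ang_spec v (hS v hv)).2.2
    have h2 := (ang_spec w (hS w hw)).2.2
    rw [h1, h2, h]
  set A := S.image ang with hA
  have hAbound : ∀ θ ∈ A, 0 ≤ θ ∧ θ < 2*π := by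
    intro θ hθ
    obtain ⟨v, hv, rfl⟩ := Finset.mem_image.mp hθ
    exact ⟨(ang_spec v (hS v hv)).1, (ang_spec v (hS v hv)).2.1⟩
  have hAcard : 5 ≤ A.card := by
    rw [hA, Finset.card_image_of_injOn hinj]; exact hcard
  have hAcov : Covers A := by
    intro φ
    have hmem : pt φ ∈ unitCircle := by
      rw [unitCircle, mem_sphere_zero_iff_norm]; exact pt_norm φ
    obtain ⟨v, hv, hsem⟩ := Set.mem_iUnion₂.mp (hcover hmem)
    refine ⟨ang v, Finset.mem_image_of_mem _ hv, ?_⟩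
    have := hsem.2
    rw [(ang_spec v (hS v hv)).2.2, pt_inner] at this
    rwa [← Real.cos_neg, neg_sub] at this
  obtain ⟨B, hBA, hB3, hBcov⟩ := main_comb A hAbound hAcard hAcov
  obtain ⟨R, hRS, hRB⟩ := Finset.subset_image_iff.mp hBA
  have hRcard : R.card = 3 := by
    rw [← hB3, ← hRB, Finset.card_image_of_injOn (hinj.mono (by exact_mod_cast hRS))]
  refine ⟨R, hRS, hRcard, ?_⟩
  intro x hx
  have hxn : ‖x‖ = 1 := by rwa [unitCircle, mem_sphere_zero_iff_norm] at hx
  obtain ⟨φ, _, _, rfl⟩ := exists_angle x hxn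
  obtain ⟨θ, hθB, hθpos⟩ := hBcov φ
  rw [← hRB] at hθB
  obtain ⟨v, hvR, rfl⟩ := Finset.mem_image.mp hθB
  refine Set.mem_iUnion₂.mpr ⟨v, hvR, hx, ?_⟩
  rw [(ang_spec v (hS v (hRS hvR))).2.2, pt_inner]
  rwa [← Real.cos_neg, neg_sub] at hθpos
end

section
/- Let f be a facet of a convex polyhedron P and suppose every open hemisphere in the minimal covering set R of the closed hemisphere S^2 \ h(f) is pairwise non-antipodal with at most one exception; if a facet f' of P has three pairwise non-parallel neighboring facets, then the set {h(f')} together with the hemispheres of the neighbors contains at least four pairwise non-antipodal open hemispheres. Consequently, in Case II of the algorithm (minimal covering set of size 6 consisting of three antipodal pairs), every facet of P contributing a hemisphere to the cover must be a parallelogram. -/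
open scoped RealInnerProductSpace

/-- The unit sphere `S² ⊆ ℝ³`. -/
noncomputable def unitSphere : Set (EuclideanSpace ℝ (Fin 3)) := Metric.sphere 0 1

/-- The open unit hemisphere of `S²` determined by a (unit) vector `v`;
for a facet `f` with outer unit normal `v` this is its set of blocking
directions `h(f)`. -/
noncomputable def openHemisphere (v : EuclideanSpace ℝ (Fin 3)) :
    Set (EuclideanSpace ℝ (Fin 3)) := {x ∈ unitSphere | 0 < ⟪v, x⟫}

/-- Two vectors are parallel if one is a scalar multiple of the other. -/
def ParallelVec (x y : EuclideanSpace ℝ (Fin 3)) : Prop := ∃ t : ℝ, y = t • x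

lemma np_facts {x y : EuclideanSpace ℝ (Fin 3)} (h : ¬ ParallelVec x y) :
    x ≠ -y ∧ y ≠ -x ∧ x ≠ y := by
  refine ⟨?_, ?_, ?_⟩
  · intro e; exact h ⟨-1, by rw [neg_one_smul]; rw [e]; simp⟩
  · intro e; exact h ⟨-1, by rw [neg_one_smul, e]⟩
  · intro e; exact h ⟨1, by rw [one_smul, e]⟩

lemma same_pair {x y p : EuclideanSpace ℝ (Fin 3)}
    (hx : x = p ∨ x = -p) (hy : y = p ∨ y = -p) : ParallelVec x y := by
  rcases hx with rfl | rfl <;> rcases hy with rfl | rfl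
  · exact ⟨1, (one_smul _ _).symm⟩
  · exact ⟨-1, by rw [neg_one_smul]⟩
  · exact ⟨-1, by rw [neg_one_smul, neg_neg]⟩
  · exact ⟨1, (one_smul _ _).symm⟩

lemma part_one (v w₁ w₂ w₃ : EuclideanSpace ℝ (Fin 3))
    (h12 : ¬ ParallelVec w₁ w₂) (h13 : ¬ ParallelVec w₁ w₃)
    (h23 : ¬ ParallelVec w₂ w₃)
    (hv1 : ¬ ParallelVec v w₁) (hv2 : ¬ ParallelVec v w₂)
    (hv3 : ¬ ParallelVec v w₃) :
    (({v, w₁, w₂, w₃} : Set (EuclideanSpace ℝ (Fin 3))).Pairwise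
        fun x y => x ≠ -y) := by
  intro x hx y hy hxy
  simp only [Set.mem_insert_iff, Set.mem_singleton_iff] at hx hy
  rcases hx with rfl | rfl | rfl | rfl <;> rcases hy with rfl | rfl | rfl | rfl <;>
    first
      | exact absurd rfl hxy
      | exact (np_facts hv1).1 | exact (np_facts hv1).2.1
      | exact (np_facts hv2).1 | exact (np_facts hv2).2.1
      | exact (np_facts hv3).1 | exact (np_facts hv3).2.1
      | exact (np_facts h12).1 | exact (np_facts h12).2.1
      | exact (np_facts h13).1 | exact (np_facts h13).2.1
      | exact (np_facts h23).1 | exact (np_facts h23).2.1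

lemma part_two (v w₁ w₂ w₃ : EuclideanSpace ℝ (Fin 3))
    (h12 : ¬ ParallelVec w₁ w₂) (h13 : ¬ ParallelVec w₁ w₃)
    (h23 : ¬ ParallelVec w₂ w₃)
    (hv1 : ¬ ParallelVec v w₁) (hv2 : ¬ ParallelVec v w₂)
    (hv3 : ¬ ParallelVec v w₃) :
    ∀ a b c : EuclideanSpace ℝ (Fin 3),
      ¬ (({v, w₁, w₂, w₃} : Set (EuclideanSpace ℝ (Fin 3))) ⊆
          {a, -a, b, -b, c, -c}) := by
  intro a b c hsub
  have Hv : (v = a ∨ v = -a) ∨ (v = b ∨ v = -b) ∨ (v = c ∨ v = -c) := by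
    have := hsub (show v ∈ ({v, w₁, w₂, w₃} : Set (EuclideanSpace ℝ (Fin 3))) by simp)
    simp only [Set.mem_insert_iff, Set.mem_singleton_iff] at this
    rcases this with h|h|h|h|h|h
    exacts [Or.inl (Or.inl h), Or.inl (Or.inr h), Or.inr (Or.inl (Or.inl h)),
      Or.inr (Or.inl (Or.inr h)), Or.inr (Or.inr (Or.inl h)), Or.inr (Or.inr (Or.inr h))]
  have H1 : (w₁ = a ∨ w₁ = -a) ∨ (w₁ = b ∨ w₁ = -b) ∨ (w₁ = c ∨ w₁ = -c) := by
    have := hsub (show w₁ ∈ ({v, w₁, w₂, w₃} : Set (EuclideanSpace ℝ (Fin 3))) by simp)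
    simp only [Set.mem_insert_iff, Set.mem_singleton_iff] at this
    rcases this with h|h|h|h|h|h
    exacts [Or.inl (Or.inl h), Or.inl (Or.inr h), Or.inr (Or.inl (Or.inl h)),
      Or.inr (Or.inl (Or.inr h)), Or.inr (Or.inr (Or.inl h)), Or.inr (Or.inr (Or.inr h))]
  have H2 : (w₂ = a ∨ w₂ = -a) ∨ (w₂ = b ∨ w₂ = -b) ∨ (w₂ = c ∨ w₂ = -c) := by
    have := hsub (show w₂ ∈ ({v, w₁, w₂, w₃} : Set (EuclideanSpace ℝ (Fin 3))) by simp)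
    simp only [Set.mem_insert_iff, Set.mem_singleton_iff] at this
    rcases this with h|h|h|h|h|h
    exacts [Or.inl (Or.inl h), Or.inl (Or.inr h), Or.inr (Or.inl (Or.inl h)),
      Or.inr (Or.inl (Or.inr h)), Or.inr (Or.inr (Or.inl h)), Or.inr (Or.inr (Or.inr h))]
  have H3 : (w₃ = a ∨ w₃ = -a) ∨ (w₃ = b ∨ w₃ = -b) ∨ (w₃ = c ∨ w₃ = -c) := by
    have := hsub (show w₃ ∈ ({v, w₁, w₂, w₃} : Set (EuclideanSpace ℝ (Fin 3))) by simp)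
    simp only [Set.mem_insert_iff, Set.mem_singleton_iff] at this
    rcases this with h|h|h|h|h|h
    exacts [Or.inl (Or.inl h), Or.inl (Or.inr h), Or.inr (Or.inl (Or.inl h)),
      Or.inr (Or.inl (Or.inr h)), Or.inr (Or.inr (Or.inl h)), Or.inr (Or.inr (Or.inr h))]
  clear hsub
  rcases Hv with Hv | Hv | Hv <;> rcases H1 with H1 | H1 | H1 <;>
    rcases H2 with H2 | H2 | H2 <;> rcases H3 with H3 | H3 | H3 <;>
    first
      | exact hv1 (same_pair Hv H1)
      | exact hv2 (same_pair Hv H2)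
      | exact hv3 (same_pair Hv H3)
      | exact h12 (same_pair H1 H2)
      | exact h13 (same_pair H1 H3)
      | exact h23 (same_pair H2 H3)

/-- Let `v` be the outer unit normal of a facet `f'` and let `w₁, w₂, w₃` be
the outer unit normals of three pairwise non-parallel neighboring facets of
`f'` (none of which is parallel to `v`, since adjacent facets are not
coplanar).  Then the four hemispheres `h(f'), h(w₁), h(w₂), h(w₃)` are
pairwise non-antipodal, and consequently these four normals cannot all belong
to three antipodal pairs of directions; hence in Case II of the algorithm
(a minimal cover of `S²` by six hemispheres, i.e. three antipodal pairs) every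
contributing facet must be a parallelogram. -/
theorem nonparallel_neighbors_give_four_nonantipodal
    (v w₁ w₂ w₃ : EuclideanSpace ℝ (Fin 3))
    (hv : ‖v‖ = 1) (h1 : ‖w₁‖ = 1) (h2 : ‖w₂‖ = 1) (h3 : ‖w₃‖ = 1)
    (h12 : ¬ ParallelVec w₁ w₂) (h13 : ¬ ParallelVec w₁ w₃)
    (h23 : ¬ ParallelVec w₂ w₃)
    (hv1 : ¬ ParallelVec v w₁) (hv2 : ¬ ParallelVec v w₂)
    (hv3 : ¬ ParallelVec v w₃) :
    (({v, w₁, w₂, w₃} : Set (EuclideanSpace ℝ (Fin 3))).Pairwise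
        fun x y => x ≠ -y) ∧
    ∀ a b c : EuclideanSpace ℝ (Fin 3),
      ¬ (({v, w₁, w₂, w₃} : Set (EuclideanSpace ℝ (Fin 3))) ⊆
          {a, -a, b, -b, c, -c}) :=
  ⟨part_one v w₁ w₂ w₃ h12 h13 h23 hv1 hv2 hv3,
   part_two v w₁ w₂ w₃ h12 h13 h23 hv1 hv2 hv3⟩
end
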